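/- arXiv:2303.14056 — 2 statements merged into one kernel-verified Lean document; each statement's English description precedes it below -/
import Mathlib

section
/- For N = 2 qubits (smallest even case with periodic boundary), V = σ^x_1 σ^y_2 − σ^y_2 σ^x_1 = 0; more generally, for even N, the operator V = Σ_{k=1}^{N/2}(σ^x_{2k-1}σ^y_{2k} − σ^y_{2k}σ^x_{2k+1}) is Hermitian and its spectrum is contained in {N − 2M : M an integer, 0 ≤ M ≤ N, M ≡ N/2 mod 2}. -/
noncomputable section
open Matrix Complex BigOperators Finset

/-- Pauli x matrix. -/
def pX : Matrix (Fin 2) (Fin 2) ℂ := !![0, 1; 1, 0]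
/-- Pauli y matrix. -/
def pY : Matrix (Fin 2) (Fin 2) ℂ := !![0, -Complex.I; Complex.I, 0]
/-- Pauli z matrix. -/
def pZ : Matrix (Fin 2) (Fin 2) ℂ := !![1, 0; 0, -1]

/-- The operator acting as `A` on the `n`-th qubit (0-based) and as identity elsewhere,
on the `N`-qubit space `(ℂ²)^⊗N`, realized as matrices indexed by `Fin N → Fin 2`. -/
def site (N : ℕ) (A : Matrix (Fin 2) (Fin 2) ℂ) (n : Fin N) :
    Matrix (Fin N → Fin 2) (Fin N → Fin 2) ℂ :=
  Matrix.of fun s t => ∏ j : Fin N, if j = n then A (s j) (t j) else if s j = t j then 1 else 0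

open Fin.NatCast in
/-- The chiral operator `V = Σ_{k=1}^{N/2} (σ^x_{2k-1} σ^y_{2k} − σ^y_{2k} σ^x_{2k+1})`
(1-based paper indices; here sites are 0-based, and indices are taken mod N via `Nat.cast`). -/
def Vop (N : ℕ) [NeZero N] : Matrix (Fin N → Fin 2) (Fin N → Fin 2) ℂ :=
  ∑ k ∈ Finset.range (N / 2),
    (site N pX (↑(2 * k)) * site N pY (↑(2 * k + 1))
      - site N pY (↑(2 * k + 1)) * site N pX (↑(2 * k + 2)))

open Fin.NatCast

def kprod {N : ℕ} (A : Fin N → Matrix (Fin 2) (Fin 2) ℂ) :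
    Matrix (Fin N → Fin 2) (Fin N → Fin 2) ℂ :=
  Matrix.of fun s t => ∏ j, A j (s j) (t j)

lemma kprod_mul {N : ℕ} (A B : Fin N → Matrix (Fin 2) (Fin 2) ℂ) :
    kprod A * kprod B = kprod (fun j => A j * B j) := by
  ext s t
  simp only [kprod, Matrix.mul_apply, Matrix.of_apply]
  rw [Fintype.prod_sum]
  exact Finset.sum_congr rfl fun x _ => (Finset.prod_mul_distrib).symm

lemma kprod_one {N : ℕ} : kprod (fun _ : Fin N => (1 : Matrix (Fin 2) (Fin 2) ℂ)) = 1 := by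
  ext s t
  simp only [kprod, Matrix.of_apply, Matrix.one_apply]
  by_cases h : s = t
  · subst h; simp
  · rw [if_neg h]
    obtain ⟨j, hj⟩ := Function.ne_iff.mp h
    exact Finset.prod_eq_zero (mem_univ j) (by simp [hj])


lemma site_eq {N : ℕ} (A : Matrix (Fin 2) (Fin 2) ℂ) (n : Fin N) :
    site N A n = kprod (fun j => if j = n then A else 1) := by
  ext s t
  simp only [site, kprod, Matrix.of_apply]
  refine Finset.prod_congr rfl fun j _ => ?_
  by_cases h : j = n <;> simp [h, Matrix.one_apply]

lemma site_comm {N : ℕ} {A B : Matrix (Fin 2) (Fin 2) ℂ} {a b : Fin N} (hab : a ≠ b) :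
    site N A a * site N B b = site N B b * site N A a := by
  rw [site_eq, site_eq, kprod_mul, kprod_mul]
  refine congrArg kprod (funext fun j => ?_)
  by_cases h1 : j = a <;> by_cases h2 : j = b <;> simp_all

lemma kprod_conjTranspose {N : ℕ} (A : Fin N → Matrix (Fin 2) (Fin 2) ℂ) :
    (kprod A)ᴴ = kprod (fun j => (A j)ᴴ) := by
  ext s t
  simp [kprod, Matrix.conjTranspose_apply, star_prod]

lemma site_conjTranspose {N : ℕ} {A : Matrix (Fin 2) (Fin 2) ℂ} (hA : Aᴴ = A) (n : Fin N) :
    (site N A n)ᴴ = site N A n := by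
  rw [site_eq, kprod_conjTranspose]
  refine congrArg kprod (funext fun j => ?_)
  by_cases h : j = n <;> simp [h, hA]

def Hx : Matrix (Fin 2) (Fin 2) ℂ := !![1, 1; 1, -1]
def Hy : Matrix (Fin 2) (Fin 2) ℂ := !![1, 1; Complex.I, -Complex.I]
def Hx' : Matrix (Fin 2) (Fin 2) ℂ := !![2⁻¹, 2⁻¹; 2⁻¹, -2⁻¹]
def Hy' : Matrix (Fin 2) (Fin 2) ℂ := !![2⁻¹, -Complex.I * 2⁻¹; 2⁻¹, Complex.I * 2⁻¹]

def zz : Fin 2 → ℂ := ![1, -1]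

lemma pZ_diag : pZ = Matrix.diagonal zz := by
  ext i j; fin_cases i <;> fin_cases j <;> simp [pZ, zz]

lemma Hx_mul_Hx' : Hx * Hx' = 1 := by
  ext i j; fin_cases i <;> fin_cases j <;>
    simp [Hx, Hx', Matrix.mul_apply, Fin.sum_univ_two, Matrix.one_apply] <;> ring

lemma Hx'_mul_Hx : Hx' * Hx = 1 := by
  ext i j; fin_cases i <;> fin_cases j <;>
    simp [Hx, Hx', Matrix.mul_apply, Fin.sum_univ_two, Matrix.one_apply] <;> ring

lemma Hy_mul_Hy' : Hy * Hy' = 1 := by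
  ext i j; fin_cases i <;> fin_cases j <;>
    simp [Hy, Hy', Matrix.mul_apply, Fin.sum_univ_two, Matrix.one_apply] <;> ring_nf <;>
    simp [Complex.I_sq] <;> ring

lemma Hy'_mul_Hy : Hy' * Hy = 1 := by
  ext i j; fin_cases i <;> fin_cases j <;>
    simp [Hy, Hy', Matrix.mul_apply, Fin.sum_univ_two, Matrix.one_apply] <;> ring_nf <;>
    simp [Complex.I_sq] <;> ring

lemma pX_mul_Hx : pX * Hx = Hx * pZ := by
  ext i j; fin_cases i <;> fin_cases j <;>
    simp [pX, pZ, Hx, Matrix.mul_apply, Fin.sum_univ_two]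

lemma pY_mul_Hy : pY * Hy = Hy * pZ := by
  ext i j; fin_cases i <;> fin_cases j <;>
    simp [pY, pZ, Hy, Matrix.mul_apply, Fin.sum_univ_two]

lemma pX_herm : pXᴴ = pX := by
  ext i j; fin_cases i <;> fin_cases j <;> simp [pX]

lemma pY_herm : pYᴴ = pY := by
  ext i j; fin_cases i <;> fin_cases j <;> simp [pY]

lemma kprod_diagonal {N : ℕ} (d : Fin N → Fin 2 → ℂ) :
    kprod (fun j => Matrix.diagonal (d j)) = Matrix.diagonal (fun s => ∏ j, d j (s j)) := by
  ext s t
  simp only [kprod, Matrix.of_apply]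
  by_cases h : s = t
  · subst h; simp [Matrix.diagonal_apply_eq]
  · rw [Matrix.diagonal_apply_ne _ h]
    obtain ⟨j, hj⟩ := Function.ne_iff.mp h
    exact Finset.prod_eq_zero (mem_univ j) (Matrix.diagonal_apply_ne _ hj)

lemma siteZ_diag {N : ℕ} (n : Fin N) :
    site N pZ n = Matrix.diagonal (fun s => zz (s n)) := by
  rw [site_eq, pZ_diag]
  have h1 : (fun j : Fin N => if j = n then Matrix.diagonal zz else 1)
      = fun j => Matrix.diagonal (if j = n then zz else fun _ => 1) := by
    funext j; by_cases h : j = n <;> simp [h, Matrix.diagonal_one]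
  rw [h1, kprod_diagonal]
  refine congrArg Matrix.diagonal (funext fun s => ?_)
  have h2 : ∀ j : Fin N, (if j = n then zz else fun _ => 1) (s j) = if j = n then zz (s j) else 1 := by
    intro j; by_cases h : j = n <;> simp [h]
  calc ∏ j, (if j = n then zz else fun _ => 1) (s j)
      = ∏ j, (if j = n then zz (s j) else 1) := Finset.prod_congr rfl fun j _ => h2 j
    _ = zz (s n) := by simp


def uu (N : ℕ) : Fin N → Matrix (Fin 2) (Fin 2) ℂ := fun j => if j.val % 2 = 0 then Hx else Hy
def uu' (N : ℕ) : Fin N → Matrix (Fin 2) (Fin 2) ℂ := fun j => if j.val % 2 = 0 then Hx' else Hy'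

lemma U_mul_U' (N : ℕ) : kprod (uu N) * kprod (uu' N) = 1 := by
  rw [kprod_mul,
    show (fun j => uu N j * uu' N j) = fun _ : Fin N => (1 : Matrix (Fin 2) (Fin 2) ℂ) from
      funext fun j => by by_cases h : j.val % 2 = 0 <;> simp [uu, uu', h, Hx_mul_Hx', Hy_mul_Hy']]
  exact kprod_one

lemma U'_mul_U (N : ℕ) : kprod (uu' N) * kprod (uu N) = 1 := by
  rw [kprod_mul,
    show (fun j => uu' N j * uu N j) = fun _ : Fin N => (1 : Matrix (Fin 2) (Fin 2) ℂ) from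
      funext fun j => by by_cases h : j.val % 2 = 0 <;> simp [uu, uu', h, Hx'_mul_Hx, Hy'_mul_Hy]]
  exact kprod_one

lemma siteX_mul_U {N : ℕ} {n : Fin N} (hn : n.val % 2 = 0) :
    site N pX n * kprod (uu N) = kprod (uu N) * site N pZ n := by
  rw [site_eq, site_eq, kprod_mul, kprod_mul]
  refine congrArg kprod (funext fun j => ?_)
  by_cases h : j = n
  · subst h; simp [uu, hn, pX_mul_Hx]
  · simp [h]

lemma siteY_mul_U {N : ℕ} {n : Fin N} (hn : n.val % 2 = 1) :
    site N pY n * kprod (uu N) = kprod (uu N) * site N pZ n := by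
  rw [site_eq, site_eq, kprod_mul, kprod_mul]
  refine congrArg kprod (funext fun j => ?_)
  by_cases h : j = n
  · subst h; simp [uu, hn, pY_mul_Hy]
  · simp [h]

lemma Vop_mul_U (N : ℕ) [NeZero N] (hEven : Even N) :
    Vop N * kprod (uu N) = kprod (uu N) *
      ∑ k ∈ Finset.range (N / 2),
        (site N pZ (↑(2 * k)) * site N pZ (↑(2 * k + 1))
          - site N pZ (↑(2 * k + 1)) * site N pZ (↑(2 * k + 2))) := by
  rw [Vop, Finset.sum_mul, Finset.mul_sum]
  refine Finset.sum_congr rfl fun k _ => ?_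
  have h2 : (2 : ℕ) ∣ N := hEven.two_dvd
  have pa : ((↑(2 * k) : Fin N)).val % 2 = 0 := by
    rw [Fin.val_natCast, Nat.mod_mod_of_dvd _ h2]; omega
  have pb : ((↑(2 * k + 1) : Fin N)).val % 2 = 1 := by
    rw [Fin.val_natCast, Nat.mod_mod_of_dvd _ h2]; omega
  have pc : ((↑(2 * k + 2) : Fin N)).val % 2 = 0 := by
    rw [Fin.val_natCast, Nat.mod_mod_of_dvd _ h2]; omega
  rw [sub_mul, mul_sub]
  congr 1
  · rw [mul_assoc, siteY_mul_U pb, ← mul_assoc, siteX_mul_U pa, mul_assoc]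
  · rw [mul_assoc, siteX_mul_U pc, ← mul_assoc, siteY_mul_U pb, mul_assoc]

def dfun (N : ℕ) [NeZero N] : (Fin N → Fin 2) → ℂ := fun s =>
  ∑ k ∈ Finset.range (N / 2),
    (zz (s ↑(2 * k)) * zz (s ↑(2 * k + 1)) - zz (s ↑(2 * k + 1)) * zz (s ↑(2 * k + 2)))

lemma D_eq (N : ℕ) [NeZero N] :
    (∑ k ∈ Finset.range (N / 2),
        (site N pZ (↑(2 * k)) * site N pZ (↑(2 * k + 1))
          - site N pZ (↑(2 * k + 1)) * site N pZ (↑(2 * k + 2))))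
      = Matrix.diagonal (dfun N) := by
  have : ∀ k : ℕ, site N pZ ((↑(2 * k) : Fin N)) * site N pZ (↑(2 * k + 1))
          - site N pZ (↑(2 * k + 1)) * site N pZ (↑(2 * k + 2))
      = Matrix.diagonal (fun s => zz (s ↑(2 * k)) * zz (s ↑(2 * k + 1))
          - zz (s ↑(2 * k + 1)) * zz (s ↑(2 * k + 2))) := by
    intro k
    rw [siteZ_diag, siteZ_diag, siteZ_diag, Matrix.diagonal_mul_diagonal,
      Matrix.diagonal_mul_diagonal, ← Matrix.diagonal_sub]
  rw [Finset.sum_congr rfl fun k _ => this k]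
  unfold dfun
  ext s t
  by_cases h : s = t
  · subst h
    simp [Matrix.diagonal_apply_eq, Matrix.sum_apply]
  · simp [Matrix.diagonal_apply_ne _ h, Matrix.sum_apply]

def Uunit (N : ℕ) : (Matrix (Fin N → Fin 2) (Fin N → Fin 2) ℂ)ˣ :=
  ⟨kprod (uu N), kprod (uu' N), U_mul_U' N, U'_mul_U N⟩

lemma Vop_conj (N : ℕ) [NeZero N] (hEven : Even N) :
    Vop N = (Uunit N : Matrix (Fin N → Fin 2) (Fin N → Fin 2) ℂ) * Matrix.diagonal (dfun N)
      * ((Uunit N)⁻¹ : (Matrix (Fin N → Fin 2) (Fin N → Fin 2) ℂ)ˣ) := by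
  have h := Vop_mul_U N hEven
  rw [D_eq] at h
  have h2 : (Uunit N : Matrix (Fin N → Fin 2) (Fin N → Fin 2) ℂ)
      * ((Uunit N)⁻¹ : (Matrix (Fin N → Fin 2) (Fin N → Fin 2) ℂ)ˣ) = 1 := Units.mul_inv _
  calc Vop N = Vop N * ((Uunit N : Matrix (Fin N → Fin 2) (Fin N → Fin 2) ℂ)
        * ((Uunit N)⁻¹ : (Matrix (Fin N → Fin 2) (Fin N → Fin 2) ℂ)ˣ)) := by rw [h2, mul_one]
    _ = (Vop N * (Uunit N : Matrix (Fin N → Fin 2) (Fin N → Fin 2) ℂ))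
        * ((Uunit N)⁻¹ : (Matrix (Fin N → Fin 2) (Fin N → Fin 2) ℂ)ˣ) := by rw [mul_assoc]
    _ = _ := by rw [show Vop N * (Uunit N : Matrix (Fin N → Fin 2) (Fin N → Fin 2) ℂ)
            = (Uunit N : Matrix (Fin N → Fin 2) (Fin N → Fin 2) ℂ) * Matrix.diagonal (dfun N) from h]

lemma spectrum_Vop (N : ℕ) [NeZero N] (hEven : Even N) :
    spectrum ℂ (Vop N) = Set.range (dfun N) := by
  rw [Vop_conj N hEven, spectrum.units_conjugate, spectrum_diagonal]

lemma sum_prod_pm (m : ℕ) (p : ℕ → ℂ) (hp : ∀ k, k < m → p k = 1 ∨ p k = -1) :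
    (∑ k ∈ Finset.range m, p k
        = m - 2 * ((Finset.range m).filter (fun k => p k = -1)).card) ∧
    (∏ k ∈ Finset.range m, p k
        = (-1) ^ ((Finset.range m).filter (fun k => p k = -1)).card) := by
  induction m with
  | zero => simp
  | succ m ih =>
    obtain ⟨ihs, ihp⟩ := ih (fun k hk => hp k (by omega))
    rw [Finset.sum_range_succ, Finset.prod_range_succ, Finset.range_add_one,
      Finset.filter_insert]
    rcases hp m (by omega) with h | h
    · rw [if_neg (by rw [h]; norm_num), h, ihs, ihp]
      constructor
      · push_cast; ring
      · ring
    · rw [if_pos h, h, Finset.card_insert_of_notMem (by simp), ihs, ihp]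
      constructor
      · push_cast; ring
      · rw [pow_succ]

lemma zz_pm (i : Fin 2) : zz i = 1 ∨ zz i = -1 := by fin_cases i <;> simp [zz]
lemma zz_sq (i : Fin 2) : zz i * zz i = 1 := by fin_cases i <;> norm_num [zz]
lemma zz_ne (i : Fin 2) : zz i ≠ 0 := by fin_cases i <;> norm_num [zz]

lemma dfun_form (N : ℕ) [NeZero N] (hEven : Even N) (s : Fin N → Fin 2) :
    ∃ M : ℕ, M ≤ N ∧ M % 2 = (N / 2) % 2 ∧ dfun N s = (N : ℂ) - 2 * M := by
  set m := N / 2 with hm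
  have h2m : 2 * m = N := by obtain ⟨r, hr⟩ := hEven; omega
  set P : ℕ → ℂ := fun k => zz (s ↑(2 * k)) * zz (s ↑(2 * k + 1)) with hP
  set Q : ℕ → ℂ := fun k => zz (s ↑(2 * k + 1)) * zz (s ↑(2 * k + 2)) with hQ
  set f : ℕ → ℂ := fun k => zz (s ↑(2 * k)) with hf
  have hpP : ∀ k, k < m → P k = 1 ∨ P k = -1 := by
    intro k _
    simp only [hP]
    rcases zz_pm (s ↑(2 * k)) with h1 | h1 <;> rcases zz_pm (s ↑(2 * k + 1)) with h2 | h2 <;>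
      rw [h1, h2] <;> norm_num
  have hpQ : ∀ k, k < m → Q k = 1 ∨ Q k = -1 := by
    intro k _
    simp only [hQ]
    rcases zz_pm (s ↑(2 * k + 1)) with h1 | h1 <;> rcases zz_pm (s ↑(2 * k + 2)) with h2 | h2 <;>
      rw [h1, h2] <;> norm_num
  obtain ⟨hsP, hprP⟩ := sum_prod_pm m P hpP
  obtain ⟨hsQ, hprQ⟩ := sum_prod_pm m Q hpQ
  set Mp := ((Finset.range m).filter (fun k => P k = -1)).card with hMpdef
  set Mq := ((Finset.range m).filter (fun k => Q k = -1)).card with hMqdef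
  have hMp : Mp ≤ m := by
    simpa using (Finset.card_filter_le (Finset.range m) (fun k => P k = -1))
  have hMq : Mq ≤ m := by
    simpa using (Finset.card_filter_le (Finset.range m) (fun k => Q k = -1))
  have hfm : f m = f 0 := by
    have e : ((2 * m : ℕ) : Fin N) = ((2 * 0 : ℕ) : Fin N) := by
      rw [h2m]; simp
    simp only [hf]
    rw [e]
  have hshift : ∏ k ∈ Finset.range m, f (k + 1) = ∏ k ∈ Finset.range m, f k := by
    have h1 := Finset.prod_range_succ' f m
    have h2 := Finset.prod_range_succ f m
    rw [hfm] at h2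
    exact mul_right_cancel₀ (zz_ne _) (h1.symm.trans h2)
  have hPQ : ∀ k, P k * Q k = f k * f (k + 1) := by
    intro k
    have e1 : 2 * (k + 1) = 2 * k + 2 := by ring
    have e2 : f (k + 1) = zz (s ↑(2 * k + 2)) := by
      simp only [hf]
      rw [e1]
    calc P k * Q k
        = (zz (s ↑(2 * k)) * zz (s ↑(2 * k + 2)))
          * (zz (s ↑(2 * k + 1)) * zz (s ↑(2 * k + 1))) := by rw [hP, hQ]; ring
      _ = f k * f (k + 1) := by rw [zz_sq, mul_one, e2]
  have hprod1 : ∏ k ∈ Finset.range m, (P k * Q k) = 1 := by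
    rw [Finset.prod_congr rfl fun k _ => hPQ k, Finset.prod_mul_distrib, hshift,
      ← Finset.prod_mul_distrib, Finset.prod_congr rfl fun k _ => zz_sq _, Finset.prod_const_one]
  have hpar : (-1 : ℂ) ^ (Mp + Mq) = 1 := by
    rw [pow_add, ← hprP, ← hprQ, ← Finset.prod_mul_distrib, hprod1]
  have heven : (Mp + Mq) % 2 = 0 := by
    rcases Nat.even_or_odd (Mp + Mq) with h | h
    · exact Nat.even_iff.mp h
    · rw [h.neg_one_pow] at hpar; norm_num at hpar
  refine ⟨m + Mp - Mq, by omega, by omega, ?_⟩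
  have hds : dfun N s = (∑ k ∈ Finset.range m, P k) - ∑ k ∈ Finset.range m, Q k := by
    rw [← Finset.sum_sub_distrib]; rfl
  rw [hds, hsP, hsQ]
  have hcast : ((m + Mp - Mq : ℕ) : ℂ) = (m : ℂ) + Mp - Mq := by
    rw [Nat.cast_sub (by omega)]; push_cast; ring
  rw [hcast]
  have hN : (N : ℂ) = 2 * m := by exact_mod_cast congrArg (Nat.cast : ℕ → ℂ) h2m.symm
  rw [hN]; ring

lemma Vop_herm (N : ℕ) [NeZero N] (hEven : Even N) : (Vop N).IsHermitian := by
  show (Vop N)ᴴ = Vop N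
  rw [Vop, Matrix.conjTranspose_sum]
  refine Finset.sum_congr rfl fun k _ => ?_
  have h2 : (2 : ℕ) ∣ N := hEven.two_dvd
  have pa : ((↑(2 * k) : Fin N)).val % 2 = 0 := by
    rw [Fin.val_natCast, Nat.mod_mod_of_dvd _ h2]; omega
  have pb : ((↑(2 * k + 1) : Fin N)).val % 2 = 1 := by
    rw [Fin.val_natCast, Nat.mod_mod_of_dvd _ h2]; omega
  have pc : ((↑(2 * k + 2) : Fin N)).val % 2 = 0 := by
    rw [Fin.val_natCast, Nat.mod_mod_of_dvd _ h2]; omega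
  have hba : ((↑(2 * k + 1) : Fin N)) ≠ ↑(2 * k) := by
    intro h; rw [h] at pb; omega
  have hcb : ((↑(2 * k + 2) : Fin N)) ≠ ↑(2 * k + 1) := by
    intro h; rw [h] at pc; omega
  rw [Matrix.conjTranspose_sub, Matrix.conjTranspose_mul, Matrix.conjTranspose_mul]
  simp only [site_conjTranspose pX_herm, site_conjTranspose pY_herm]
  rw [site_comm hba, site_comm hcb]

lemma Vop2 : Vop 2 = 0 := by
  have e2 : ((2 * 0 + 2 : ℕ) : Fin 2) = ((2 * 0 : ℕ) : Fin 2) := by decide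
  have h01 : ((2 * 0 + 1 : ℕ) : Fin 2) ≠ ((2 * 0 : ℕ) : Fin 2) := by decide
  rw [Vop, show (2 : ℕ) / 2 = 1 from rfl, Finset.sum_range_one, e2, site_comm h01, sub_self]


/-- for `N = 2`, `V = σ^x_1 σ^y_2 − σ^y_2 σ^x_1 = 0`; more generally, for even
`N`, the operator `V` is Hermitian and its spectrum is contained in
`{N − 2M : M ∈ ℕ, M ≤ N, M ≡ N/2 mod 2}`. -/
theorem stmt1 (N : ℕ) [NeZero N] (hEven : Even N) :
    Vop 2 = 0 ∧ (Vop N).IsHermitian ∧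
      ∀ μ ∈ spectrum ℂ (Vop N), ∃ M : ℕ, M ≤ N ∧ M % 2 = (N / 2) % 2 ∧ μ = (N : ℂ) - 2 * M := by
  refine ⟨Vop2, Vop_herm N hEven, fun μ hμ => ?_⟩
  rw [spectrum_Vop N hEven] at hμ
  obtain ⟨s, hs⟩ := hμ
  obtain ⟨M, h1, h2, h3⟩ := dfun_form N hEven s
  exact ⟨M, h1, h2, hs ▸ h3⟩
end
end

section
/- Let H = Σ_{n=1}^{N} (σ^x_n σ^x_{n+1} + σ^y_n σ^y_{n+1}) be the periodic XX Hamiltonian on N qubits (N even, σ_{N+1} = σ_1), and V = Σ_{k=1}^{N/2} (σ^x_{2k-1} σ^y_{2k} − σ^y_{2k} σ^x_{2k+1}). Then [V, H] = 0. -/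
set_option maxHeartbeats 1000000


noncomputable section
open Matrix Complex BigOperators Finset

/-- The periodic XX Hamiltonian `H = Σ_{n=1}^{N} (σ^x_n σ^x_{n+1} + σ^y_n σ^y_{n+1})`,
with cyclic boundary conditions. -/
def Hxx (N : ℕ) [NeZero N] : Matrix (Fin N → Fin 2) (Fin N → Fin 2) ℂ :=
  ∑ n : Fin N, (site N pX n * site N pX (n + 1) + site N pY n * site N pY (n + 1))

open Fin.CommRing Fin.NatCast

/-! ### Auxiliary material: tensor-product words of one-site matrices -/

/-- The tensor word with one-site factors `f j`. -/
def word (N : ℕ) (f : Fin N → Matrix (Fin 2) (Fin 2) ℂ) :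
    Matrix (Fin N → Fin 2) (Fin N → Fin 2) ℂ :=
  Matrix.of fun s t => ∏ j : Fin N, f j (s j) (t j)

/-- One-site factor function: `A` at site `n`, identity elsewhere. -/
def sM {N : ℕ} (A : Matrix (Fin 2) (Fin 2) ℂ) (n : Fin N) : Fin N → Matrix (Fin 2) (Fin 2) ℂ :=
  fun j => if j = n then A else 1

lemma site_eq_word {N : ℕ} (A : Matrix (Fin 2) (Fin 2) ℂ) (n : Fin N) :
    site N A n = word N (sM A n) := by
  ext s t
  simp only [site, word, Matrix.of_apply]
  refine Finset.prod_congr rfl fun j _ => ?_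
  simp only [sM]
  split_ifs <;> simp_all [Matrix.one_apply]

lemma word_mul {N : ℕ} (f g : Fin N → Matrix (Fin 2) (Fin 2) ℂ) :
    word N f * word N g = word N (f * g) := by
  ext s t
  simp only [word, Matrix.mul_apply, Matrix.of_apply, Pi.mul_apply]
  rw [Fintype.sum_congr _ _ (fun u => (Finset.prod_mul_distrib).symm)]
  exact (Fintype.prod_sum fun x j => f x (s x) j * g x j (t x)).symm

lemma word_eq_smul {N : ℕ} (c : ℂ) (f g : Fin N → Matrix (Fin 2) (Fin 2) ℂ) (n : Fin N)
    (h : f n = c • g n) (h' : ∀ j, j ≠ n → f j = g j) : word N f = c • word N g := by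
  ext s t
  simp only [word, Matrix.of_apply, Matrix.smul_apply, smul_eq_mul]
  rw [← Finset.mul_prod_erase univ _ (Finset.mem_univ n),
    ← Finset.mul_prod_erase univ (fun j => g j (s j) (t j)) (Finset.mem_univ n), h]
  rw [Finset.prod_congr rfl (fun j hj => by rw [h' j (Finset.ne_of_mem_erase hj)])]
  simp [Matrix.smul_apply, smul_eq_mul, mul_assoc]

lemma pXX : pX * pX = 1 := by
  ext i j; fin_cases i <;> fin_cases j <;>
    simp [pX, Matrix.mul_apply, Fin.sum_univ_two, Matrix.one_apply]
lemma pYY : pY * pY = 1 := by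
  ext i j; fin_cases i <;> fin_cases j <;>
    simp [pY, Matrix.mul_apply, Fin.sum_univ_two, Matrix.one_apply]
lemma pXY : pX * pY = Complex.I • pZ := by
  ext i j; fin_cases i <;> fin_cases j <;> simp [pX, pY, pZ, Matrix.mul_apply, Fin.sum_univ_two]
lemma pYX : pY * pX = (-Complex.I) • pZ := by
  ext i j; fin_cases i <;> fin_cases j <;> simp [pX, pY, pZ, Matrix.mul_apply, Fin.sum_univ_two]

/-- Single bond term of the Hamiltonian. -/
def hop (N : ℕ) [NeZero N] (n : Fin N) : Matrix (Fin N → Fin 2) (Fin N → Fin 2) ℂ :=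
  site N pX n * site N pX (n + 1) + site N pY n * site N pY (n + 1)

/-- Single term of the chiral operator. -/
def vop1 (N : ℕ) [NeZero N] (t : Fin N) : Matrix (Fin N → Fin 2) (Fin N → Fin 2) ℂ :=
  site N pX t * site N pY (t + 1) - site N pY (t + 1) * site N pX (t + 2)

/-- The telescoping quantity. -/
def DD (N : ℕ) [NeZero N] (t : Fin N) : Matrix (Fin N → Fin 2) (Fin N → Fin 2) ℂ :=
  (2 * Complex.I) • (word N (sM pY (t - 1) * sM pZ t * sM pY (t + 1)) + word N (sM pZ t))

lemma finKeyNe (N : ℕ) [NeZero N] : ∀ (u v : Fin N) (m : ℕ), 0 < m → m < N → u - v = (m : ℕ) → u ≠ v := by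
  intro u v m h1 h2 h3 h
  rw [h, sub_self] at h3
  exact absurd (Fin.natCast_eq_zero.mp h3.symm) (Nat.not_dvd_of_pos_of_lt h1 h2)

lemma expandComm {R : Type*} [Ring R] (A B C D : R) :
    (A - B) * (C + D) - (C + D) * (A - B)
      = (A * C - C * A) + (A * D - D * A) - (B * C - C * B) - (B * D - D * B) := by
  noncomm_ring

lemma lemFe (N : ℕ) [NeZero N] (hN : 4 ≤ N) (t : Fin N) :
    vop1 N t * hop N (t - 1) - hop N (t - 1) * vop1 N t
      = (2 * Complex.I) • word N (sM pY (t - 1) * sM pZ t * sM pY (t + 1)) := by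
  have key := finKeyNe N
  have hba : t + 1 ≠ t := key _ _ 1 (by omega) (by omega) (by push_cast; ring)
  have hab : t ≠ t + 1 := hba.symm
  have hca : t + 2 ≠ t := key _ _ 2 (by omega) (by omega) (by push_cast; ring)
  have hac := hca.symm
  have hcb : t + 2 ≠ t + 1 := key _ _ 1 (by omega) (by omega) (by push_cast; ring)
  have hbc := hcb.symm
  have hda : t + 3 ≠ t := key _ _ 3 (by omega) (by omega) (by push_cast; ring)
  have had := hda.symm
  have hdb : t + 3 ≠ t + 1 := key _ _ 2 (by omega) (by omega) (by push_cast; ring)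
  have hbd := hdb.symm
  have hdc : t + 3 ≠ t + 2 := key _ _ 1 (by omega) (by omega) (by push_cast; ring)
  have hcd := hdc.symm
  have hae : t ≠ t - 1 := key _ _ 1 (by omega) (by omega) (by push_cast; ring)
  have hea := hae.symm
  have hbe : t + 1 ≠ t - 1 := key _ _ 2 (by omega) (by omega) (by push_cast; ring)
  have heb := hbe.symm
  have hce : t + 2 ≠ t - 1 := key _ _ 3 (by omega) (by omega) (by push_cast; ring)
  have hec := hce.symm
  clear key
  have e1 : t - 1 + 1 = t := by ring
  simp only [vop1, hop, e1, site_eq_word]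
  rw [expandComm]
  simp only [word_mul]
  have g15 : (sM pX t * sM pY (t + 1)) * (sM pX (t - 1) * sM pX t)
      = (sM pX (t - 1) * sM pX t) * (sM pX t * sM pY (t + 1)) := by
    funext j; simp only [Pi.mul_apply, sM]; split_ifs <;> simp_all only [ne_eq, not_true_eq_false, not_false_eq_true, one_mul, mul_one] <;> trivial
  have g16 : word N ((sM pX t * sM pY (t + 1)) * (sM pY (t - 1) * sM pY t))
      = Complex.I • word N (sM pY (t - 1) * sM pZ t * sM pY (t + 1)) := by
    refine word_eq_smul _ _ _ t ?_ ?_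
    · simp [sM, hab, hae, pXY]
    · intro j hj; simp only [Pi.mul_apply, sM]
      split_ifs <;> simp_all only [ne_eq, not_true_eq_false, not_false_eq_true, one_mul, mul_one, pXX, pYY, pXY, pYX] <;> trivial
  have g17 : word N ((sM pY (t - 1) * sM pY t) * (sM pX t * sM pY (t + 1)))
      = (-Complex.I) • word N (sM pY (t - 1) * sM pZ t * sM pY (t + 1)) := by
    refine word_eq_smul _ _ _ t ?_ ?_
    · simp [sM, hab, hae, pYX]
    · intro j hj; simp only [Pi.mul_apply, sM]
      split_ifs <;> simp_all only [ne_eq, not_true_eq_false, not_false_eq_true, one_mul, mul_one, pXX, pYY, pXY, pYX] <;> trivial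
  have g18 : (sM pY (t + 1) * sM pX (t + 2)) * (sM pX (t - 1) * sM pX t)
      = (sM pX (t - 1) * sM pX t) * (sM pY (t + 1) * sM pX (t + 2)) := by
    funext j; simp only [Pi.mul_apply, sM]; split_ifs <;> simp_all only [ne_eq, not_true_eq_false, not_false_eq_true, one_mul, mul_one] <;> trivial
  have g19 : (sM pY (t + 1) * sM pX (t + 2)) * (sM pY (t - 1) * sM pY t)
      = (sM pY (t - 1) * sM pY t) * (sM pY (t + 1) * sM pX (t + 2)) := by
    funext j; simp only [Pi.mul_apply, sM]; split_ifs <;> simp_all only [ne_eq, not_true_eq_false, not_false_eq_true, one_mul, mul_one] <;> trivial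
  rw [g15, g16, g17, g18, g19]
  module

lemma lemFa (N : ℕ) [NeZero N] (hN : 4 ≤ N) (t : Fin N) :
    vop1 N t * hop N t - hop N t * vop1 N t
      = (2 * Complex.I) • word N (sM pZ t) - (2 * Complex.I) • word N (sM pZ (t + 1))
        + (2 * Complex.I) • word N (sM pX t * sM pZ (t + 1) * sM pX (t + 2)) := by
  have key := finKeyNe N
  have hba : t + 1 ≠ t := key _ _ 1 (by omega) (by omega) (by push_cast; ring)
  have hab : t ≠ t + 1 := hba.symm
  have hca : t + 2 ≠ t := key _ _ 2 (by omega) (by omega) (by push_cast; ring)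
  have hac := hca.symm
  have hcb : t + 2 ≠ t + 1 := key _ _ 1 (by omega) (by omega) (by push_cast; ring)
  have hbc := hcb.symm
  have hda : t + 3 ≠ t := key _ _ 3 (by omega) (by omega) (by push_cast; ring)
  have had := hda.symm
  have hdb : t + 3 ≠ t + 1 := key _ _ 2 (by omega) (by omega) (by push_cast; ring)
  have hbd := hdb.symm
  have hdc : t + 3 ≠ t + 2 := key _ _ 1 (by omega) (by omega) (by push_cast; ring)
  have hcd := hdc.symm
  have hae : t ≠ t - 1 := key _ _ 1 (by omega) (by omega) (by push_cast; ring)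
  have hea := hae.symm
  have hbe : t + 1 ≠ t - 1 := key _ _ 2 (by omega) (by omega) (by push_cast; ring)
  have heb := hbe.symm
  have hce : t + 2 ≠ t - 1 := key _ _ 3 (by omega) (by omega) (by push_cast; ring)
  have hec := hce.symm
  clear key
  simp only [vop1, hop, site_eq_word]
  rw [expandComm]
  simp only [word_mul]
  have a1 : word N ((sM pX t * sM pY (t + 1)) * (sM pX t * sM pX (t + 1)))
      = (-Complex.I) • word N (sM pZ (t + 1)) := by
    refine word_eq_smul _ _ _ (t + 1) ?_ ?_
    · simp [sM, hba, pYX]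
    · intro j hj; simp only [Pi.mul_apply, sM]
      split_ifs <;> simp_all only [ne_eq, not_true_eq_false, not_false_eq_true, one_mul, mul_one, pXX, pYY, pXY, pYX] <;> trivial
  have a2 : word N ((sM pX t * sM pX (t + 1)) * (sM pX t * sM pY (t + 1)))
      = Complex.I • word N (sM pZ (t + 1)) := by
    refine word_eq_smul _ _ _ (t + 1) ?_ ?_
    · simp [sM, hba, pXY]
    · intro j hj; simp only [Pi.mul_apply, sM]
      split_ifs <;> simp_all only [ne_eq, not_true_eq_false, not_false_eq_true, one_mul, mul_one, pXX, pYY, pXY, pYX] <;> trivial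
  have a3 : word N ((sM pX t * sM pY (t + 1)) * (sM pY t * sM pY (t + 1)))
      = Complex.I • word N (sM pZ t) := by
    refine word_eq_smul _ _ _ t ?_ ?_
    · simp [sM, hab, pXY]
    · intro j hj; simp only [Pi.mul_apply, sM]
      split_ifs <;> simp_all only [ne_eq, not_true_eq_false, not_false_eq_true, one_mul, mul_one, pXX, pYY, pXY, pYX] <;> trivial
  have a4 : word N ((sM pY t * sM pY (t + 1)) * (sM pX t * sM pY (t + 1)))
      = (-Complex.I) • word N (sM pZ t) := by
    refine word_eq_smul _ _ _ t ?_ ?_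
    · simp [sM, hab, pYX]
    · intro j hj; simp only [Pi.mul_apply, sM]
      split_ifs <;> simp_all only [ne_eq, not_true_eq_false, not_false_eq_true, one_mul, mul_one, pXX, pYY, pXY, pYX] <;> trivial
  have a5 : word N ((sM pY (t + 1) * sM pX (t + 2)) * (sM pX t * sM pX (t + 1)))
      = (-Complex.I) • word N (sM pX t * sM pZ (t + 1) * sM pX (t + 2)) := by
    refine word_eq_smul _ _ _ (t + 1) ?_ ?_
    · simp [sM, hba, hbc, pYX]
    · intro j hj; simp only [Pi.mul_apply, sM]
      split_ifs <;> simp_all only [ne_eq, not_true_eq_false, not_false_eq_true, one_mul, mul_one, pXX, pYY, pXY, pYX] <;> trivial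
  have a6 : word N ((sM pX t * sM pX (t + 1)) * (sM pY (t + 1) * sM pX (t + 2)))
      = Complex.I • word N (sM pX t * sM pZ (t + 1) * sM pX (t + 2)) := by
    refine word_eq_smul _ _ _ (t + 1) ?_ ?_
    · simp [sM, hba, hbc, pXY]
    · intro j hj; simp only [Pi.mul_apply, sM]
      split_ifs <;> simp_all only [ne_eq, not_true_eq_false, not_false_eq_true, one_mul, mul_one, pXX, pYY, pXY, pYX] <;> trivial
  have a7 : (sM pY (t + 1) * sM pX (t + 2)) * (sM pY t * sM pY (t + 1))
      = (sM pY t * sM pY (t + 1)) * (sM pY (t + 1) * sM pX (t + 2)) := by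
    funext j; simp only [Pi.mul_apply, sM]; split_ifs <;> simp_all only [ne_eq, not_true_eq_false, not_false_eq_true, one_mul, mul_one] <;> trivial
  rw [a1, a2, a3, a4, a5, a6, a7]
  module

lemma lemFb (N : ℕ) [NeZero N] (hN : 4 ≤ N) (t : Fin N) :
    vop1 N t * hop N (t + 1) - hop N (t + 1) * vop1 N t
      = (2 * Complex.I) • word N (sM pZ (t + 1)) - (2 * Complex.I) • word N (sM pZ (t + 2))
        - (2 * Complex.I) • word N (sM pX t * sM pZ (t + 1) * sM pX (t + 2)) := by
  have key := finKeyNe N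
  have hba : t + 1 ≠ t := key _ _ 1 (by omega) (by omega) (by push_cast; ring)
  have hab : t ≠ t + 1 := hba.symm
  have hca : t + 2 ≠ t := key _ _ 2 (by omega) (by omega) (by push_cast; ring)
  have hac := hca.symm
  have hcb : t + 2 ≠ t + 1 := key _ _ 1 (by omega) (by omega) (by push_cast; ring)
  have hbc := hcb.symm
  have hda : t + 3 ≠ t := key _ _ 3 (by omega) (by omega) (by push_cast; ring)
  have had := hda.symm
  have hdb : t + 3 ≠ t + 1 := key _ _ 2 (by omega) (by omega) (by push_cast; ring)
  have hbd := hdb.symm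
  have hdc : t + 3 ≠ t + 2 := key _ _ 1 (by omega) (by omega) (by push_cast; ring)
  have hcd := hdc.symm
  have hae : t ≠ t - 1 := key _ _ 1 (by omega) (by omega) (by push_cast; ring)
  have hea := hae.symm
  have hbe : t + 1 ≠ t - 1 := key _ _ 2 (by omega) (by omega) (by push_cast; ring)
  have heb := hbe.symm
  have hce : t + 2 ≠ t - 1 := key _ _ 3 (by omega) (by omega) (by push_cast; ring)
  have hec := hce.symm
  clear key
  have e2 : t + 1 + 1 = t + 2 := by ring
  simp only [vop1, hop, e2, site_eq_word]
  rw [expandComm]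
  simp only [word_mul]
  have b1 : word N ((sM pX t * sM pY (t + 1)) * (sM pX (t + 1) * sM pX (t + 2)))
      = (-Complex.I) • word N (sM pX t * sM pZ (t + 1) * sM pX (t + 2)) := by
    refine word_eq_smul _ _ _ (t + 1) ?_ ?_
    · simp [sM, hba, hbc, pYX]
    · intro j hj; simp only [Pi.mul_apply, sM]
      split_ifs <;> simp_all only [ne_eq, not_true_eq_false, not_false_eq_true, one_mul, mul_one, pXX, pYY, pXY, pYX] <;> trivial
  have b2 : word N ((sM pX (t + 1) * sM pX (t + 2)) * (sM pX t * sM pY (t + 1)))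
      = Complex.I • word N (sM pX t * sM pZ (t + 1) * sM pX (t + 2)) := by
    refine word_eq_smul _ _ _ (t + 1) ?_ ?_
    · simp [sM, hba, hbc, pXY]
    · intro j hj; simp only [Pi.mul_apply, sM]
      split_ifs <;> simp_all only [ne_eq, not_true_eq_false, not_false_eq_true, one_mul, mul_one, pXX, pYY, pXY, pYX] <;> trivial
  have b3 : (sM pX t * sM pY (t + 1)) * (sM pY (t + 1) * sM pY (t + 2))
      = (sM pY (t + 1) * sM pY (t + 2)) * (sM pX t * sM pY (t + 1)) := by
    funext j; simp only [Pi.mul_apply, sM]; split_ifs <;> simp_all only [ne_eq, not_true_eq_false, not_false_eq_true, one_mul, mul_one] <;> trivial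
  have b4 : word N ((sM pY (t + 1) * sM pX (t + 2)) * (sM pX (t + 1) * sM pX (t + 2)))
      = (-Complex.I) • word N (sM pZ (t + 1)) := by
    refine word_eq_smul _ _ _ (t + 1) ?_ ?_
    · simp [sM, hba, hbc, pYX]
    · intro j hj; simp only [Pi.mul_apply, sM]
      split_ifs <;> simp_all only [ne_eq, not_true_eq_false, not_false_eq_true, one_mul, mul_one, pXX, pYY, pXY, pYX] <;> trivial
  have b5 : word N ((sM pX (t + 1) * sM pX (t + 2)) * (sM pY (t + 1) * sM pX (t + 2)))
      = Complex.I • word N (sM pZ (t + 1)) := by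
    refine word_eq_smul _ _ _ (t + 1) ?_ ?_
    · simp [sM, hba, hbc, pXY]
    · intro j hj; simp only [Pi.mul_apply, sM]
      split_ifs <;> simp_all only [ne_eq, not_true_eq_false, not_false_eq_true, one_mul, mul_one, pXX, pYY, pXY, pYX] <;> trivial
  have b6 : word N ((sM pY (t + 1) * sM pX (t + 2)) * (sM pY (t + 1) * sM pY (t + 2)))
      = Complex.I • word N (sM pZ (t + 2)) := by
    refine word_eq_smul _ _ _ (t + 2) ?_ ?_
    · simp [sM, hca, hcb, pXY]
    · intro j hj; simp only [Pi.mul_apply, sM]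
      split_ifs <;> simp_all only [ne_eq, not_true_eq_false, not_false_eq_true, one_mul, mul_one, pXX, pYY, pXY, pYX] <;> trivial
  have b7 : word N ((sM pY (t + 1) * sM pY (t + 2)) * (sM pY (t + 1) * sM pX (t + 2)))
      = (-Complex.I) • word N (sM pZ (t + 2)) := by
    refine word_eq_smul _ _ _ (t + 2) ?_ ?_
    · simp [sM, hca, hcb, pYX]
    · intro j hj; simp only [Pi.mul_apply, sM]
      split_ifs <;> simp_all only [ne_eq, not_true_eq_false, not_false_eq_true, one_mul, mul_one, pXX, pYY, pXY, pYX] <;> trivial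
  rw [b1, b2, b3, b4, b5, b6, b7]
  module

lemma lemFc (N : ℕ) [NeZero N] (hN : 4 ≤ N) (t : Fin N) :
    vop1 N t * hop N (t + 2) - hop N (t + 2) * vop1 N t
      = -((2 * Complex.I) • word N (sM pY (t + 1) * sM pZ (t + 2) * sM pY (t + 3))) := by
  have key := finKeyNe N
  have hba : t + 1 ≠ t := key _ _ 1 (by omega) (by omega) (by push_cast; ring)
  have hab : t ≠ t + 1 := hba.symm
  have hca : t + 2 ≠ t := key _ _ 2 (by omega) (by omega) (by push_cast; ring)
  have hac := hca.symm
  have hcb : t + 2 ≠ t + 1 := key _ _ 1 (by omega) (by omega) (by push_cast; ring)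
  have hbc := hcb.symm
  have hda : t + 3 ≠ t := key _ _ 3 (by omega) (by omega) (by push_cast; ring)
  have had := hda.symm
  have hdb : t + 3 ≠ t + 1 := key _ _ 2 (by omega) (by omega) (by push_cast; ring)
  have hbd := hdb.symm
  have hdc : t + 3 ≠ t + 2 := key _ _ 1 (by omega) (by omega) (by push_cast; ring)
  have hcd := hdc.symm
  have hae : t ≠ t - 1 := key _ _ 1 (by omega) (by omega) (by push_cast; ring)
  have hea := hae.symm
  have hbe : t + 1 ≠ t - 1 := key _ _ 2 (by omega) (by omega) (by push_cast; ring)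
  have heb := hbe.symm
  have hce : t + 2 ≠ t - 1 := key _ _ 3 (by omega) (by omega) (by push_cast; ring)
  have hec := hce.symm
  clear key
  have e3 : t + 2 + 1 = t + 3 := by ring
  simp only [vop1, hop, e3, site_eq_word]
  rw [expandComm]
  simp only [word_mul]
  have c1 : (sM pX t * sM pY (t + 1)) * (sM pX (t + 2) * sM pX (t + 3))
      = (sM pX (t + 2) * sM pX (t + 3)) * (sM pX t * sM pY (t + 1)) := by
    funext j; simp only [Pi.mul_apply, sM]; split_ifs <;> simp_all only [ne_eq, not_true_eq_false, not_false_eq_true, one_mul, mul_one] <;> trivial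
  have c2 : (sM pX t * sM pY (t + 1)) * (sM pY (t + 2) * sM pY (t + 3))
      = (sM pY (t + 2) * sM pY (t + 3)) * (sM pX t * sM pY (t + 1)) := by
    funext j; simp only [Pi.mul_apply, sM]; split_ifs <;> simp_all only [ne_eq, not_true_eq_false, not_false_eq_true, one_mul, mul_one] <;> trivial
  have c3 : (sM pY (t + 1) * sM pX (t + 2)) * (sM pX (t + 2) * sM pX (t + 3))
      = (sM pX (t + 2) * sM pX (t + 3)) * (sM pY (t + 1) * sM pX (t + 2)) := by
    funext j; simp only [Pi.mul_apply, sM]; split_ifs <;> simp_all only [ne_eq, not_true_eq_false, not_false_eq_true, one_mul, mul_one] <;> trivial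
  have c4 : word N ((sM pY (t + 1) * sM pX (t + 2)) * (sM pY (t + 2) * sM pY (t + 3)))
      = Complex.I • word N (sM pY (t + 1) * sM pZ (t + 2) * sM pY (t + 3)) := by
    refine word_eq_smul _ _ _ (t + 2) ?_ ?_
    · simp [sM, hcb, hcd, pXY]
    · intro j hj; simp only [Pi.mul_apply, sM]
      split_ifs <;> simp_all only [ne_eq, not_true_eq_false, not_false_eq_true, one_mul, mul_one, pXX, pYY, pXY, pYX] <;> trivial
  have c5 : word N ((sM pY (t + 2) * sM pY (t + 3)) * (sM pY (t + 1) * sM pX (t + 2)))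
      = (-Complex.I) • word N (sM pY (t + 1) * sM pZ (t + 2) * sM pY (t + 3)) := by
    refine word_eq_smul _ _ _ (t + 2) ?_ ?_
    · simp [sM, hcb, hcd, pYX]
    · intro j hj; simp only [Pi.mul_apply, sM]
      split_ifs <;> simp_all only [ne_eq, not_true_eq_false, not_false_eq_true, one_mul, mul_one, pXX, pYY, pXY, pYX] <;> trivial
  rw [c1, c2, c3, c4, c5]
  module

lemma lemOff (N : ℕ) [NeZero N] (hN : 4 ≤ N) (t : Fin N) :
    ∀ n : Fin N, n ∉ ({t - 1, t, t + 1, t + 2} : Finset (Fin N)) →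
      vop1 N t * hop N n - hop N n * vop1 N t = 0 := by
  have key := finKeyNe N
  have hba : t + 1 ≠ t := key _ _ 1 (by omega) (by omega) (by push_cast; ring)
  have hab : t ≠ t + 1 := hba.symm
  have hca : t + 2 ≠ t := key _ _ 2 (by omega) (by omega) (by push_cast; ring)
  have hac := hca.symm
  have hcb : t + 2 ≠ t + 1 := key _ _ 1 (by omega) (by omega) (by push_cast; ring)
  have hbc := hcb.symm
  have hda : t + 3 ≠ t := key _ _ 3 (by omega) (by omega) (by push_cast; ring)
  have had := hda.symm
  have hdb : t + 3 ≠ t + 1 := key _ _ 2 (by omega) (by omega) (by push_cast; ring)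
  have hbd := hdb.symm
  have hdc : t + 3 ≠ t + 2 := key _ _ 1 (by omega) (by omega) (by push_cast; ring)
  have hcd := hdc.symm
  have hae : t ≠ t - 1 := key _ _ 1 (by omega) (by omega) (by push_cast; ring)
  have hea := hae.symm
  have hbe : t + 1 ≠ t - 1 := key _ _ 2 (by omega) (by omega) (by push_cast; ring)
  have heb := hbe.symm
  have hce : t + 2 ≠ t - 1 := key _ _ 3 (by omega) (by omega) (by push_cast; ring)
  have hec := hce.symm
  clear key
  intro n hn
  simp only [Finset.mem_insert, Finset.mem_singleton, not_or] at hn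
  obtain ⟨hn1, hn2, hn3, hn4⟩ := hn
  have hn2s : t ≠ n := fun h => hn2 h.symm
  have hn3s : t + 1 ≠ n := fun h => hn3 h.symm
  have hn4s : t + 2 ≠ n := fun h => hn4 h.symm
  have hm1 : n + 1 ≠ t := fun h => hn1 (eq_sub_of_add_eq h)
  have hm1s : t ≠ n + 1 := fun h => hm1 h.symm
  have hm2 : n + 1 ≠ t + 1 := fun h => hn2 (add_right_cancel h)
  have hm2s : t + 1 ≠ n + 1 := fun h => hm2 h.symm
  have hm3 : n + 1 ≠ t + 2 := by
    intro h
    exact hn3 (add_right_cancel (a := n) (b := (1 : Fin N)) (by rw [h]; ring))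
  have hm3s : t + 2 ≠ n + 1 := fun h => hm3 h.symm
  have hnn : n ≠ n + 1 := (finKeyNe N _ _ 1 (by omega) (by omega) (by push_cast; ring)).symm
  have hnns := hnn.symm
  simp only [vop1, hop, site_eq_word]
  rw [expandComm]
  simp only [word_mul]
  have d1 : (sM pX t * sM pY (t + 1)) * (sM pX n * sM pX (n + 1))
      = (sM pX n * sM pX (n + 1)) * (sM pX t * sM pY (t + 1)) := by
    funext j; simp only [Pi.mul_apply, sM]; split_ifs <;> simp_all only [ne_eq, not_true_eq_false, not_false_eq_true, one_mul, mul_one] <;> trivial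
  have d2 : (sM pX t * sM pY (t + 1)) * (sM pY n * sM pY (n + 1))
      = (sM pY n * sM pY (n + 1)) * (sM pX t * sM pY (t + 1)) := by
    funext j; simp only [Pi.mul_apply, sM]; split_ifs <;> simp_all only [ne_eq, not_true_eq_false, not_false_eq_true, one_mul, mul_one] <;> trivial
  have d3 : (sM pY (t + 1) * sM pX (t + 2)) * (sM pX n * sM pX (n + 1))
      = (sM pX n * sM pX (n + 1)) * (sM pY (t + 1) * sM pX (t + 2)) := by
    funext j; simp only [Pi.mul_apply, sM]; split_ifs <;> simp_all only [ne_eq, not_true_eq_false, not_false_eq_true, one_mul, mul_one] <;> trivial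
  have d4 : (sM pY (t + 1) * sM pX (t + 2)) * (sM pY n * sM pY (n + 1))
      = (sM pY n * sM pY (n + 1)) * (sM pY (t + 1) * sM pX (t + 2)) := by
    funext j; simp only [Pi.mul_apply, sM]; split_ifs <;> simp_all only [ne_eq, not_true_eq_false, not_false_eq_true, one_mul, mul_one] <;> trivial
  rw [d1, d2, d3, d4]
  module

lemma innerSumXX (N : ℕ) [NeZero N] (hN : 4 ≤ N) (t : Fin N) :
    ∑ n : Fin N, (vop1 N t * hop N n - hop N n * vop1 N t) = DD N t - DD N (t + 2) := by
  classical
  have key := finKeyNe N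
  have hba : t + 1 ≠ t := key _ _ 1 (by omega) (by omega) (by push_cast; ring)
  have hab : t ≠ t + 1 := hba.symm
  have hca : t + 2 ≠ t := key _ _ 2 (by omega) (by omega) (by push_cast; ring)
  have hac := hca.symm
  have hcb : t + 2 ≠ t + 1 := key _ _ 1 (by omega) (by omega) (by push_cast; ring)
  have hbc := hcb.symm
  have hae : t ≠ t - 1 := key _ _ 1 (by omega) (by omega) (by push_cast; ring)
  have hea := hae.symm
  have hbe : t + 1 ≠ t - 1 := key _ _ 2 (by omega) (by omega) (by push_cast; ring)
  have heb := hbe.symm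
  have hce : t + 2 ≠ t - 1 := key _ _ 3 (by omega) (by omega) (by push_cast; ring)
  have hec := hce.symm
  have hmem1 : t - 1 ∉ ({t, t + 1, t + 2} : Finset (Fin N)) := by simp [hea, heb, hec]
  have hmem2 : t ∉ ({t + 1, t + 2} : Finset (Fin N)) := by simp [hab, hac]
  have hmem3 : (t + 1 : Fin N) ∉ ({t + 2} : Finset (Fin N)) := by simp [hbc]
  rw [← Finset.sum_subset (Finset.subset_univ ({t - 1, t, t + 1, t + 2} : Finset (Fin N)))
      (fun n _ hn => lemOff N hN t n hn)]
  rw [Finset.sum_insert hmem1, Finset.sum_insert hmem2, Finset.sum_insert hmem3,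
    Finset.sum_singleton]
  rw [lemFe N hN t, lemFa N hN t, lemFb N hN t, lemFc N hN t]
  simp only [DD]
  rw [show t + 2 - 1 = t + 1 from by ring, show t + 2 + 1 = t + 3 from by ring]
  module

lemma vop_eq (N : ℕ) [NeZero N] :
    Vop N = ∑ k ∈ Finset.range (N / 2), vop1 N ((2 * k : ℕ) : Fin N) := by
  rw [Vop]
  refine Finset.sum_congr rfl fun k _ => ?_
  rw [vop1]
  have c1 : ((2 * k + 1 : ℕ) : Fin N) = ((2 * k : ℕ) : Fin N) + 1 := by push_cast; ring
  have c2 : ((2 * k + 2 : ℕ) : Fin N) = ((2 * k : ℕ) : Fin N) + 2 := by push_cast; ring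
  rw [c1, c2]

/-- the chiral operator `V` commutes with the periodic XX Hamiltonian,
`[V, H] = 0`, for any even number of qubits `N`. -/
theorem stmt3 (N : ℕ) [NeZero N] (hEven : Even N) :
    Vop N * Hxx N - Hxx N * Vop N = 0 := by
  rcases lt_or_ge N 4 with h4 | h4
  · -- the degenerate case `N = 2`, where `V = 0`
    have hN2 : N = 2 := by
      have h0 := NeZero.ne N
      rcases hEven with ⟨m, hm⟩
      omega
    subst hN2
    have hV : Vop 2 = 0 := by
      rw [Vop]
      have h22 : (2 / 2 : ℕ) = 1 := rfl
      rw [h22, Finset.sum_range_one]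
      norm_num
      rw [show (2 : Fin 2) = 0 from rfl]
      have h01 : (0 : Fin 2) ≠ 1 := Fin.ne_of_val_ne (by simp)
      have h10 : (1 : Fin 2) ≠ 0 := Fin.ne_of_val_ne (by simp)
      rw [site_eq_word, site_eq_word, word_mul, word_mul]
      rw [show (sM pX 0 * sM pY 1 : Fin 2 → Matrix (Fin 2) (Fin 2) ℂ)
          = sM pY 1 * sM pX 0 from by
        funext j; simp only [Pi.mul_apply, sM]; split_ifs <;> simp_all only [ne_eq, not_true_eq_false, not_false_eq_true, one_mul, mul_one] <;> trivial]
      exact sub_self _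
    rw [hV, zero_mul, mul_zero, sub_zero]
  · have hM2 : 2 * (N / 2) = N := by rcases hEven with ⟨m, hm⟩; omega
    have hHxx : Hxx N = ∑ n : Fin N, hop N n := rfl
    rw [vop_eq, hHxx, Finset.sum_mul, Finset.mul_sum, ← Finset.sum_sub_distrib]
    calc
      ∑ k ∈ Finset.range (N / 2),
          (vop1 N ((2 * k : ℕ) : Fin N) * ∑ n : Fin N, hop N n
            - (∑ n : Fin N, hop N n) * vop1 N ((2 * k : ℕ) : Fin N))
          = ∑ k ∈ Finset.range (N / 2),
              (DD N ((2 * k : ℕ) : Fin N) - DD N (((2 * k : ℕ) : Fin N) + 2)) := by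
        refine Finset.sum_congr rfl fun k _ => ?_
        rw [Finset.mul_sum, Finset.sum_mul, ← Finset.sum_sub_distrib]
        exact innerSumXX N h4 _
      _ = ∑ k ∈ Finset.range (N / 2),
            (DD N ((2 * k : ℕ) : Fin N) - DD N ((2 * (k + 1) : ℕ) : Fin N)) := by
        refine Finset.sum_congr rfl fun k _ => ?_
        rw [show ((2 * (k + 1) : ℕ) : Fin N) = ((2 * k : ℕ) : Fin N) + 2 from by push_cast; ring]
      _ = DD N ((2 * 0 : ℕ) : Fin N) - DD N ((2 * (N / 2) : ℕ) : Fin N) :=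
        Finset.sum_range_sub' (fun k => DD N ((2 * k : ℕ) : Fin N)) (N / 2)
      _ = 0 := by
        rw [hM2, Fin.natCast_self]
        norm_num
end
end
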